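/- Let G be a second countable locally compact Hausdorff group with Haar measure μ, and let U be a compact invariant neighborhood of the identity (gUg⁻¹ = U for all g). Then the function φ_U(g) := μ(U ∩ gU) is a positive definite class function on G, i.e., φ_U(h⁻¹gh) = φ_U(g) for all g,h ∈ G. -/

import Mathlib

open MeasureTheory
open scoped ComplexOrder Topology Pointwise

/-- For a second countable locally compact Hausdorff unimodular group `G` with Haar
measure `μ` and a compact invariant identity neighborhood `U`, the function
`φ_U(g) = μ(U ∩ gU)` is a positive definite class function on `G`. -/
theorem stmt_9 {G : Type*} [Group G] [TopologicalSpace G] [IsTopologicalGroup G]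
    [LocallyCompactSpace G] [SecondCountableTopology G] [T2Space G]
    [MeasurableSpace G] [BorelSpace G]
    (μ : Measure G) [μ.IsHaarMeasure] [μ.IsInvInvariant]
    (U : Set G) (hUc : IsCompact U) (hU1 : U ∈ 𝓝 (1 : G))
    (hUinv : ∀ g : G, (fun x => g * x * g⁻¹) '' U = U) :
    (∀ (n : ℕ) (g : Fin n → G) (c : Fin n → ℂ),
      0 ≤ ∑ i, ∑ j, (starRingEnd ℂ) (c i) * c j *
          ((μ (U ∩ ((g i)⁻¹ * g j) • U)).toReal : ℂ)) ∧
    ∀ g h : G, μ (U ∩ (h⁻¹ * g * h) • U) = μ (U ∩ g • U) := by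
  have hUm : MeasurableSet U := hUc.isClosed.measurableSet
  haveI : μ.IsMulRightInvariant :=
    μ.inv_eq_self ▸ MeasureTheory.Measure.inv.instIsMulRightInvariant
  constructor
  · -- positive definiteness
    intro n g c
    set A : Fin n → Set G := fun i => g i • U with hA
    have hAm : ∀ i, MeasurableSet (A i) := fun i =>
      ((hUc.smul (g i)).isClosed).measurableSet
    have hAfin : ∀ i, μ (A i) < ⊤ := fun i => (hUc.smul (g i)).measure_lt_top
    -- rewrite each term using translated sets
    have key : ∀ i j, μ (U ∩ ((g i)⁻¹ * g j) • U) = μ (A i ∩ A j) := by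
      intro i j
      have : A i ∩ A j = g i • (U ∩ ((g i)⁻¹ * g j) • U) := by
        rw [Set.smul_set_inter, smul_smul]
        simp [hA, mul_assoc]
      rw [this, measure_smul]
    -- indicator functions
    set f : Fin n → G → ℂ := fun i => (A i).indicator (fun _ => c i) with hf
    have hprod : ∀ i j (x : G),
        (starRingEnd ℂ) (f i x) * f j x
          = (A i ∩ A j).indicator (fun _ => (starRingEnd ℂ) (c i) * c j) x := by
      intro i j x
      by_cases hi : x ∈ A i <;> by_cases hj : x ∈ A j <;>
        simp [hf, Set.indicator_apply, hi, hj]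
    have hint : ∀ i j,
        ∫ x, (starRingEnd ℂ) (f i x) * f j x ∂μ
          = (starRingEnd ℂ) (c i) * c j * ((μ (A i ∩ A j)).toReal : ℂ) := by
      intro i j
      simp_rw [hprod]
      rw [integral_indicator_const _ ((hAm i).inter (hAm j))]
      simp [mul_comm, Measure.real]
    have hInteg : ∀ i j, Integrable (fun x => (starRingEnd ℂ) (f i x) * f j x) μ := by
      intro i j
      simp_rw [hprod]
      rw [integrable_indicator_iff ((hAm i).inter (hAm j))]
      exact (integrableOn_const_iff (by finiteness)).2 (Or.inr (lt_of_le_of_lt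
        (measure_mono Set.inter_subset_left) (hAfin i)))
    calc (0 : ℂ) ≤ ∫ x, ((Complex.normSq (∑ j, f j x) : ℝ) : ℂ) ∂μ := by
          rw [show ∫ x, ((Complex.normSq (∑ j, f j x) : ℝ) : ℂ) ∂μ
              = ((∫ x, Complex.normSq (∑ j, f j x) ∂μ : ℝ) : ℂ) from integral_ofReal,
            Complex.zero_le_real]
          exact integral_nonneg fun x => Complex.normSq_nonneg _
      _ = ∫ x, (starRingEnd ℂ) (∑ i, f i x) * (∑ j, f j x) ∂μ := by
          congr 1; ext x
          rw [← Complex.normSq_eq_conj_mul_self]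
      _ = ∫ x, ∑ i, ∑ j, (starRingEnd ℂ) (f i x) * f j x ∂μ := by
          congr 1; ext x
          rw [map_sum, Finset.sum_mul]
          congr 1; ext i
          rw [Finset.mul_sum]
      _ = ∑ i, ∑ j, ∫ x, (starRingEnd ℂ) (f i x) * f j x ∂μ := by
          rw [integral_finset_sum _ fun i _ =>
            integrable_finset_sum _ fun j _ => hInteg i j]
          exact Finset.sum_congr rfl fun i _ =>
            integral_finset_sum _ fun j _ => hInteg i j
      _ = ∑ i, ∑ j, (starRingEnd ℂ) (c i) * c j *
            ((μ (U ∩ ((g i)⁻¹ * g j) • U)).toReal : ℂ) := by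
          refine Finset.sum_congr rfl fun i _ => Finset.sum_congr rfl fun j _ => ?_
          rw [hint i j, key i j]
  · -- class function
    intro g h
    have hmem : ∀ (k x : G), k * x * k⁻¹ ∈ U ↔ x ∈ U := by
      intro k x
      constructor
      · intro hx
        rw [← hUinv k⁻¹]
        exact ⟨k * x * k⁻¹, hx, by group⟩
      · intro hx
        rw [← hUinv k]
        exact ⟨x, hx, rfl⟩
    have hT : (fun x => h * x * h⁻¹) ⁻¹' (U ∩ g • U) = U ∩ (h⁻¹ * g * h) • U := by
      ext x
      simp only [Set.mem_preimage, Set.mem_inter_iff, Set.mem_smul_set]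
      constructor
      · rintro ⟨h1, v, hv, hgv⟩
        refine ⟨(hmem h x).mp h1, h⁻¹ * v * h, ?_, ?_⟩
        · have := (hmem h⁻¹ v).mpr hv
          simpa using this
        · simp only [smul_eq_mul] at hgv ⊢
          have hx : x = h⁻¹ * (g * v) * h := by rw [hgv]; group
          rw [hx]; group
      · rintro ⟨h1, v, hv, hgv⟩
        refine ⟨(hmem h x).mpr h1, h * v * h⁻¹, (hmem h v).mpr hv, ?_⟩
        simp only [smul_eq_mul] at hgv ⊢
        rw [← hgv]; group
    have hmeas : MeasurableSet (U ∩ g • U) :=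
      hUm.inter ((hUc.smul g).isClosed).measurableSet
    calc μ (U ∩ (h⁻¹ * g * h) • U)
        = μ ((fun x => h * x * h⁻¹) ⁻¹' (U ∩ g • U)) := by rw [hT]
      _ = μ ((fun x => h * x) ⁻¹' ((fun x => x * h⁻¹) ⁻¹' (U ∩ g • U))) := by
          rw [← Set.preimage_comp]; rfl
      _ = μ ((fun x => x * h⁻¹) ⁻¹' (U ∩ g • U)) :=
          measure_preimage_mul μ h _
      _ = μ (U ∩ g • U) := measure_preimage_mul_right μ h⁻¹ _
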